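/- Let P be a transition matrix on a finite set X with stationary distribution π (π(x) > 0 for all x), reversible with respect to π, and suppose the symmetric matrix S(x,y) = √(π(x)/π(y))·P(x,y) is positive semidefinite (equivalently, P has nonnegative eigenvalues). Suppose there exist x* ∈ X, a function V : X → [1,∞), and a constant α ∈ (0,1) such that (PV)(x) ≤ α·V(x) for all x ∈ X ∖ {x*}, where (PV)(x) = Σ_{x'} P(x,x')·V(x'). Then for all t ≥ 0 and all x ∈ X, ‖P^t(x,·) − π‖_TV ≤ 2·V(x)·α^{t+1}; consequently, for every ε ∈ (0,1/2), τ_x(P,ε) ≤ (1/(1−α))·log(2·V(x)/ε). -/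

import Mathlib

open Finset

noncomputable section

variable {X : Type*}

/-- Total variation distance between two (finitely supported) distributions. -/
def tvDist [Fintype X] (ζ μ : X → ℝ) : ℝ :=
  ⨆ A : Finset X, |∑ a ∈ A, ζ a - ∑ a ∈ A, μ a|

/-- The lazy version `(P + I)/2` of a transition matrix. -/
def lazyM [Fintype X] [DecidableEq X] (P : Matrix X X ℝ) : Matrix X X ℝ :=
  (2 : ℝ)⁻¹ • (P + 1)

/-- Mixing time started from `x`. -/
def mixTimeFrom [Fintype X] [DecidableEq X] (P : Matrix X X ℝ) (μ : X → ℝ) (ε : ℝ) (x : X) : ℕ :=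
  sInf {t : ℕ | tvDist (fun y => (P ^ t) x y) μ ≤ ε}

/-- Worst-case mixing time. -/
def mixTime [Fintype X] [DecidableEq X] (P : Matrix X X ℝ) (μ : X → ℝ) (ε : ℝ) : ℕ :=
  Finset.univ.sup (mixTimeFrom P μ ε)

/-- Variational spectral gap of a reversible transition matrix. -/
def specGap [Fintype X] (P : Matrix X X ℝ) (μ : X → ℝ) : ℝ :=
  sInf { r : ℝ | ∃ f : X → ℝ,
    (2⁻¹ * ∑ x, ∑ y, (f x - f y) ^ 2 * μ x * μ y) ≠ 0 ∧
    r = (2⁻¹ * ∑ x, ∑ y, (f x - f y) ^ 2 * P x y * μ x) /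
        (2⁻¹ * ∑ x, ∑ y, (f x - f y) ^ 2 * μ x * μ y) }

/-- Restricted spectral gap on `X0`. -/
def restGap [Fintype X] (P : Matrix X X ℝ) (μ : X → ℝ) (X0 : Finset X) : ℝ :=
  sInf { r : ℝ | ∃ f : X → ℝ,
    0 < (∑ x ∈ X0, ∑ y ∈ X0, (f x - f y) ^ 2 * μ x * μ y) ∧
    r = (∑ x ∈ X0, ∑ y ∈ X0, (f x - f y) ^ 2 * P x y * μ x) /
        (∑ x ∈ X0, ∑ y ∈ X0, (f x - f y) ^ 2 * μ x * μ y) }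

/-- `c(ρ) = 4 / (1 - ρ^{-1/2})³`. -/
def cFun (ρ : ℝ) : ℝ := 4 / (1 - ρ ^ (-(2 : ℝ)⁻¹)) ^ 3

/-- Maximum neighborhood size. -/
def Mmax [Fintype X] (N : X → Finset X) : ℕ := Finset.univ.sup fun x => (N x).card

/-- Minimal value of `π`. -/
def piMin [Fintype X] [Nonempty X] (π : X → ℝ) : ℝ := ⨅ x, π x

/-- `R = min_{x ≠ x*} max_{y ∈ N(x)} π(y)/π(x)`. -/
def Rval [Fintype X] (π : X → ℝ) (N : X → Finset X) (xstar : X) : ℝ :=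
  sInf ((fun x => sSup ((fun y => π y / π x) '' (N x : Set X))) '' {x | x ≠ xstar})

/-- Restricted `R|_{X₀}`. -/
def RvalRes [Fintype X] [DecidableEq X] (π : X → ℝ) (N : X → Finset X) (X0 : Finset X)
    (x0star : X) : ℝ :=
  sInf ((fun x => sSup ((fun y => π y / π x) '' ((N x ∩ X0 : Finset X) : Set X))) ''
    {x | x ∈ X0 ∧ x ≠ x0star})

/-- Random walk Metropolis–Hastings transition matrix. -/
def rwMH [Fintype X] [DecidableEq X] (π : X → ℝ) (N : X → Finset X) : Matrix X X ℝ :=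
  Matrix.of fun x y =>
    if y ∈ N x then min (((N x).card : ℝ))⁻¹ (π y / (π x * ((N y).card : ℝ)))
    else if y = x then
      1 - ∑ z ∈ N x, min (((N x).card : ℝ))⁻¹ (π z / (π x * ((N z).card : ℝ)))
    else 0

/-- The clipping function `clip(u, ℓ, L)`. -/
def clip (l L u : ℝ) : ℝ := if u < l then l else if u ≤ L then u else L

/-- Normalizing constant of the informed proposal. -/
def Zh [Fintype X] (π : X → ℝ) (N : X → Finset X) (l L : ℝ) (x : X) : ℝ :=
  ∑ y ∈ N x, clip l L (π y / π x)

/-- Informed proposal kernel. -/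
def Kh [Fintype X] [DecidableEq X] (π : X → ℝ) (N : X → Finset X) (l L : ℝ) (x y : X) : ℝ :=
  (if y ∈ N x then clip l L (π y / π x) else 0) / Zh π N l L x

/-- Informed Metropolis–Hastings transition matrix. -/
def infMH [Fintype X] [DecidableEq X] (π : X → ℝ) (N : X → Finset X) (l L : ℝ) :
    Matrix X X ℝ :=
  Matrix.of fun x y =>
    if y = x then
      1 - ∑ z ∈ Finset.univ.erase x,
        Kh π N l L x z * min 1 ((π z * Kh π N l L z x) / (π x * Kh π N l L x z))
    else Kh π N l L x y * min 1 ((π y * Kh π N l L y x) / (π x * Kh π N l L x y))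

/-- List of consecutive edges of a list of vertices. -/
def edgeList : List X → List (X × X)
  | a :: b :: rest => (a, b) :: edgeList (b :: rest)
  | _ => []

/-- `γ` is a path from `x` to `y` (x ≠ y) with all edges in `E` and no repeated edge. -/
def IsPathIn (E : Finset (X × X)) (x y : X) (γ : List X) : Prop :=
  x ≠ y ∧ γ.head? = some x ∧ γ.getLast? = some y ∧
    (∀ e ∈ edgeList γ, e ∈ E) ∧ (edgeList γ).Nodup

/-- `Φ(x,y) = Σ_{γ ∈ Γ_E(x,y)} φ(γ)`. -/
def flowBetween (E : Finset (X × X)) (φ : List X → ℝ) (x y : X) : ℝ :=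
  ∑' γ : {γ : List X // IsPathIn E x y γ}, φ γ

/-- Flow from `x` to `y` through the edge `e`. -/
def flowBetweenThrough (E : Finset (X × X)) (φ : List X → ℝ) (x y : X) (e : X × X) : ℝ :=
  ∑' γ : {γ : List X // IsPathIn E x y γ ∧ e ∈ edgeList γ}, φ γ

/-- `w`-length of a path. -/
def wlen (w : X × X → ℝ) (γ : List X) : ℝ := ((edgeList γ).map w).sum

/-- Congestion `A(E, w, φ)`. -/
def congestion [Fintype X] (π : X → ℝ) (P : Matrix X X ℝ) (E : Finset (X × X))
    (w : X × X → ℝ) (φ : List X → ℝ) : ℝ :=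
  ⨆ e ∈ E,
    (∑' γ : {γ : List X // (∃ x y, IsPathIn E x y γ) ∧ e ∈ edgeList γ}, wlen w γ * φ γ) /
      (π e.1 * P e.1 e.2 * w e)

/-- `N_S(x) = {x' ∈ N(x) : π(x')/π(x) ≥ S}`. -/
def NS [Fintype X] (π : X → ℝ) (N : X → Finset X) (S : ℝ) (x : X) : Finset X :=
  (N x).filter fun y => S ≤ π y / π x

/-- Edge set `E_S`. -/
def ES [Fintype X] [DecidableEq X] (π : X → ℝ) (N : X → Finset X) (S : ℝ) : Finset (X × X) :=
  Finset.univ.filter fun e => e.1 ∈ NS π N S e.2 ∨ e.2 ∈ NS π N S e.1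

/-- Restricted `N|^S_{X₀}(x)`. -/
def NSres [Fintype X] [DecidableEq X] (π : X → ℝ) (N : X → Finset X) (X0 : Finset X) (S : ℝ)
    (x : X) : Finset X :=
  ((N x) ∩ X0).filter fun y => S ≤ π y / π x

/-- Restricted edge set `E_S⁰`. -/
def ESres [Fintype X] [DecidableEq X] (π : X → ℝ) (N : X → Finset X) (X0 : Finset X)
    (S : ℝ) : Finset (X × X) :=
  Finset.univ.filter fun e =>
    (e.1 ∈ X0 ∧ e.2 ∈ X0) ∧ (e.1 ∈ NSres π N X0 S e.2 ∨ e.2 ∈ NSres π N X0 S e.1)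

end

namespace Stmt14Proof

open Finset Matrix

set_option linter.unusedSectionVars false
set_option linter.unusedVariables false
set_option maxHeartbeats 1000000

noncomputable section

variable {X : Type*} [Fintype X] [DecidableEq X]

structure H (π : X → ℝ) (P : Matrix X X ℝ) (xstar : X) (V : X → ℝ) (α : ℝ) : Prop where
  πpos : ∀ x, 0 < π x
  πsum : ∑ x, π x = 1
  Prow : ∀ x, ∑ y, P x y = 1
  Pnn : ∀ x y, 0 ≤ P x y
  stat : ∀ y, ∑ x, π x * P x y = π y
  rev : ∀ x y, π x * P x y = π y * P y x
  psd : (Matrix.of fun x y => Real.sqrt (π x / π y) * P x y).PosSemidef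
  V1 : ∀ x, 1 ≤ V x
  Vstar : V xstar = 1
  α0 : 0 < α
  α1 : α < 1
  drift : ∀ x, x ≠ xstar → ∑ y, P x y * V y ≤ α * V x

variable (P : Matrix X X ℝ) (xstar : X)

def Qm : Matrix X X ℝ :=
  Matrix.of fun x y => if x = xstar ∨ y = xstar then 0 else P x y

def oneE : X → ℝ := fun x => if x = xstar then 0 else 1

def app (M : Matrix X X ℝ) (g : X → ℝ) : X → ℝ := fun x => ∑ y, M x y * g y

def rowAct (M : Matrix X X ℝ) (g : X → ℝ) : X → ℝ := fun y => ∑ z, g z * M z y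

def ip (π : X → ℝ) (g h : X → ℝ) : ℝ := ∑ x, π x * g x * h x

variable (π V : X → ℝ) (α : ℝ)

lemma Qm_apply (x y : X) :
    Qm P xstar x y = if x = xstar ∨ y = xstar then 0 else P x y := rfl

variable {π P xstar V α}

lemma hQnn (h : H π P xstar V α) (x y : X) : 0 ≤ Qm P xstar x y := by
  rw [Qm_apply]; split
  · exact le_refl 0
  · exact h.Pnn x y

lemma hQle (h : H π P xstar V α) (x y : X) : Qm P xstar x y ≤ P x y := by
  rw [Qm_apply]; split
  · exact h.Pnn x y
  · exact le_refl _

lemma Qrow0 (y : X) : Qm P xstar xstar y = 0 := by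
  rw [Qm_apply]; simp

lemma Qcol0 (x : X) : Qm P xstar x xstar = 0 := by
  rw [Qm_apply]; simp

lemma Qrev (h : H π P xstar V α) (x y : X) :
    π x * Qm P xstar x y = π y * Qm P xstar y x := by
  rw [Qm_apply, Qm_apply]
  by_cases hx : x = xstar <;> by_cases hy : y = xstar <;> simp [hx, hy, or_comm]
  exact h.rev x y

lemma Qpow_nn (h : H π P xstar V α) (t : ℕ) (x y : X) : 0 ≤ (Qm P xstar ^ t) x y := by
  induction t generalizing x y with
  | zero => simp [Matrix.one_apply]; split <;> norm_num
  | succ s ih =>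
    rw [pow_succ, Matrix.mul_apply]
    exact Finset.sum_nonneg fun z _ => mul_nonneg (ih x z) (hQnn h z y)

lemma Qpow_col0 (h : H π P xstar V α) (t : ℕ) (x : X) : (Qm P xstar ^ (t+1)) x xstar = 0 := by
  rw [pow_succ, Matrix.mul_apply]
  exact Finset.sum_eq_zero fun z _ => by rw [Qcol0, mul_zero]

lemma Qpow_rev (h : H π P xstar V α) (t : ℕ) (x y : X) :
    π x * (Qm P xstar ^ t) x y = π y * (Qm P xstar ^ t) y x := by
  induction t generalizing x y with
  | zero =>
    by_cases hxy : x = y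
    · subst hxy; rfl
    · simp [Matrix.one_apply, hxy, Ne.symm hxy]
  | succ s ih =>
    rw [pow_succ]
    conv_rhs => rw [← pow_succ, pow_succ']
    rw [Matrix.mul_apply, Matrix.mul_apply, Finset.mul_sum, Finset.mul_sum]
    refine Finset.sum_congr rfl fun z _ => ?_
    calc π x * ((Qm P xstar ^ s) x z * Qm P xstar z y)
        = (π x * (Qm P xstar ^ s) x z) * Qm P xstar z y := by ring
      _ = ((Qm P xstar ^ s) z x) * (π z * Qm P xstar z y) := by rw [ih]; ring
      _ = ((Qm P xstar ^ s) z x) * (π y * Qm P xstar y z) := by rw [Qrev h]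
      _ = π y * (Qm P xstar y z * (Qm P xstar ^ s) z x) := by ring

lemma Ppow_nn (h : H π P xstar V α) (t : ℕ) (x y : X) : 0 ≤ (P ^ t) x y := by
  induction t generalizing x y with
  | zero => simp [Matrix.one_apply]; split <;> norm_num
  | succ s ih =>
    rw [pow_succ, Matrix.mul_apply]
    exact Finset.sum_nonneg fun z _ => mul_nonneg (ih x z) (h.Pnn z y)

lemma Ppow_row (h : H π P xstar V α) (t : ℕ) (x : X) : ∑ y, (P ^ t) x y = 1 := by
  induction t generalizing x with
  | zero => simp [Matrix.one_apply]
  | succ s ih =>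
    have : ∀ y, (P ^ (s+1)) x y = ∑ z, (P ^ s) x z * P z y := by
      intro y; rw [pow_succ, Matrix.mul_apply]
    simp only [this]
    rw [Finset.sum_comm]
    calc ∑ z, ∑ y, (P ^ s) x z * P z y = ∑ z, (P ^ s) x z * ∑ y, P z y := by
          simp [Finset.mul_sum]
      _ = ∑ z, (P ^ s) x z := by simp [h.Prow]
      _ = 1 := ih x

lemma Ppow_stat (h : H π P xstar V α) (t : ℕ) (y : X) : ∑ x, π x * (P ^ t) x y = π y := by
  induction t generalizing y with
  | zero => simp [Matrix.one_apply]
  | succ s ih =>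
    have : ∀ x, (P ^ (s+1)) x y = ∑ z, (P ^ s) x z * P z y := by
      intro x; rw [pow_succ, Matrix.mul_apply]
    simp only [this, Finset.mul_sum]
    rw [Finset.sum_comm]
    calc ∑ z, ∑ x, π x * ((P ^ s) x z * P z y)
        = ∑ z, (∑ x, π x * (P ^ s) x z) * P z y := by
          refine Finset.sum_congr rfl fun z _ => ?_
          rw [Finset.sum_mul]; refine Finset.sum_congr rfl fun x _ => by ring
      _ = ∑ z, π z * P z y := by simp [ih]
      _ = π y := h.stat y


lemma amgm {a b u v : ℝ} (hu : 0 < u) (hv : 0 < v) :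
    a * b ≤ (a ^ 2 * v / u + b ^ 2 * u / v) / 2 := by
  rw [le_div_iff₀ (by norm_num : (0:ℝ) < 2), div_add_div _ _ hu.ne' hv.ne',
    le_div_iff₀ (mul_pos hu hv)]
  nlinarith [sq_nonneg (a * v - b * u)]

lemma one_le_αV (h : H π P xstar V α) {x : X} (hx : x ≠ xstar) : 1 ≤ α * V x := by
  calc (1:ℝ) = ∑ y, P x y := (h.Prow x).symm
    _ ≤ ∑ y, P x y * V y :=
        Finset.sum_le_sum fun y _ => le_mul_of_one_le_right (h.Pnn x y) (h.V1 y)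
    _ ≤ α * V x := h.drift x hx

lemma QV_le (h : H π P xstar V α) (x : X) :
    ∑ y, Qm P xstar x y * V y ≤ α * oneE xstar x * V x := by
  by_cases hx : x = xstar
  · subst hx
    simp [Qrow0, oneE]
  · have h1 : ∑ y, Qm P xstar x y * V y ≤ ∑ y, P x y * V y :=
      Finset.sum_le_sum fun y _ =>
        mul_le_mul_of_nonneg_right (hQle h x y) (le_trans zero_le_one (h.V1 y))
    have h2 := h.drift x hx
    simp only [oneE, if_neg hx, mul_one]
    linarith

/-- Rayleigh bound for the taboo form. -/
lemma rayleigh (h : H π P xstar V α) (g : X → ℝ) :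
    ip π g (app (Qm P xstar) g) ≤ α * ∑ x, π x * oneE xstar x * g x ^ 2 := by
  have hV0 : ∀ x, (0:ℝ) < V x := fun x => lt_of_lt_of_le zero_lt_one (h.V1 x)
  have key : ∀ x y, π x * Qm P xstar x y * (g x * g y) ≤
      π x * Qm P xstar x y * ((g x ^ 2 * V y / V x + g y ^ 2 * V x / V y) / 2) := by
    intro x y
    exact mul_le_mul_of_nonneg_left (amgm (hV0 x) (hV0 y))
      (mul_nonneg (h.πpos x).le (hQnn h x y))
  have expand : ip π g (app (Qm P xstar) g)
      = ∑ x, ∑ y, π x * Qm P xstar x y * (g x * g y) := by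
    unfold ip app
    refine Finset.sum_congr rfl fun x _ => ?_
    rw [Finset.mul_sum]
    · refine Finset.sum_congr rfl fun y _ => by ring
  rw [expand]
  have split : ∀ x y, π x * Qm P xstar x y * ((g x ^ 2 * V y / V x + g y ^ 2 * V x / V y) / 2)
      = (π x * Qm P xstar x y * (g x ^ 2 * V y / V x)) / 2
        + (π x * Qm P xstar x y * (g y ^ 2 * V x / V y)) / 2 := fun x y => by ring
  have hsum1 : ∑ x, ∑ y, π x * Qm P xstar x y * (g x ^ 2 * V y / V x)
      ≤ α * ∑ x, π x * oneE xstar x * g x ^ 2 := by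
    have hx : ∀ x, ∑ y, π x * Qm P xstar x y * (g x ^ 2 * V y / V x)
        = (π x * g x ^ 2 / V x) * ∑ y, Qm P xstar x y * V y := by
      intro x; rw [Finset.mul_sum]
      refine Finset.sum_congr rfl fun y _ => by ring
    calc ∑ x, ∑ y, π x * Qm P xstar x y * (g x ^ 2 * V y / V x)
        = ∑ x, (π x * g x ^ 2 / V x) * ∑ y, Qm P xstar x y * V y := by
          exact Finset.sum_congr rfl fun x _ => hx x
      _ ≤ ∑ x, (π x * g x ^ 2 / V x) * (α * oneE xstar x * V x) := by
          refine Finset.sum_le_sum fun x _ => ?_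
          refine mul_le_mul_of_nonneg_left (QV_le h x)
            (div_nonneg (mul_nonneg (h.πpos x).le (sq_nonneg _)) (hV0 x).le)
      _ = ∑ x, α * (π x * oneE xstar x * g x ^ 2) := by
          refine Finset.sum_congr rfl fun x _ => ?_
          field_simp [(hV0 x).ne']
      _ = α * ∑ x, π x * oneE xstar x * g x ^ 2 := by rw [← Finset.mul_sum]
  have hsum2 : ∑ x, ∑ y, π x * Qm P xstar x y * (g y ^ 2 * V x / V y)
      = ∑ x, ∑ y, π x * Qm P xstar x y * (g x ^ 2 * V y / V x) := by
    rw [Finset.sum_comm]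
    refine Finset.sum_congr rfl fun y _ => Finset.sum_congr rfl fun x _ => ?_
    calc π x * Qm P xstar x y * (g y ^ 2 * V x / V y)
        = (π x * Qm P xstar x y) * (g y ^ 2 * V x / V y) := by ring
      _ = (π y * Qm P xstar y x) * (g y ^ 2 * V x / V y) := by rw [Qrev h]
      _ = π y * Qm P xstar y x * (g y ^ 2 * V x / V y) := by ring
  calc ∑ x, ∑ y, π x * Qm P xstar x y * (g x * g y)
      ≤ ∑ x, ∑ y, π x * Qm P xstar x y * ((g x ^ 2 * V y / V x + g y ^ 2 * V x / V y) / 2) :=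
        Finset.sum_le_sum fun x _ => Finset.sum_le_sum fun y _ => key x y
    _ = (∑ x, ∑ y, π x * Qm P xstar x y * (g x ^ 2 * V y / V x)) / 2
        + (∑ x, ∑ y, π x * Qm P xstar x y * (g y ^ 2 * V x / V y)) / 2 := by
        rw [Finset.sum_div, Finset.sum_div, ← Finset.sum_add_distrib]
        refine Finset.sum_congr rfl fun x _ => ?_
        rw [Finset.sum_div, Finset.sum_div, ← Finset.sum_add_distrib]
        exact Finset.sum_congr rfl fun y _ => split x y
    _ ≤ α * ∑ x, π x * oneE xstar x * g x ^ 2 := by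
        rw [hsum2]
        linarith [hsum1]

lemma sqrt_entry_mul (h : H π P xstar V α) (x y : X) (r s : ℝ) :
    (Real.sqrt (π x) * r) * (Real.sqrt (π x / π y) * P x y) * (Real.sqrt (π y) * s)
      = π x * P x y * (r * s) := by
  have hx := h.πpos x
  have hy := h.πpos y
  have h2 : Real.sqrt (π y) ≠ 0 := ne_of_gt (Real.sqrt_pos.mpr hy)
  have h1 : Real.sqrt (π x) * Real.sqrt (π x) = π x := Real.mul_self_sqrt hx.le
  rw [Real.sqrt_div hx.le]
  calc (Real.sqrt (π x) * r) * (Real.sqrt (π x) / Real.sqrt (π y) * P x y)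
        * (Real.sqrt (π y) * s)
      = (Real.sqrt (π x) * Real.sqrt (π x)) * (Real.sqrt (π y) / Real.sqrt (π y))
        * (P x y * (r * s)) := by ring
    _ = π x * 1 * (P x y * (r * s)) := by rw [h1, div_self h2]
    _ = π x * P x y * (r * s) := by ring

/-- The taboo quadratic form is positive semidefinite. -/
lemma qform_nn (h : H π P xstar V α) (g : X → ℝ) :
    0 ≤ ip π g (app (Qm P xstar) g) := by
  set S : Matrix X X ℝ := Matrix.of fun x y => Real.sqrt (π x / π y) * P x y with hS
  set w : X → ℝ := fun x => if x = xstar then 0 else Real.sqrt (π x) * g x with hw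
  have h0 : 0 ≤ star w ⬝ᵥ S.mulVec w := h.psd.dotProduct_mulVec_nonneg w
  have h0' : 0 ≤ w ⬝ᵥ S.mulVec w := by simpa using h0
  have key : w ⬝ᵥ S.mulVec w = ip π g (app (Qm P xstar) g) := by
    unfold ip app
    rw [dotProduct]
    refine Finset.sum_congr rfl fun x _ => ?_
    rw [Matrix.mulVec, dotProduct, Finset.mul_sum, Finset.mul_sum]
    refine Finset.sum_congr rfl fun y _ => ?_
    show w x * (S x y * w y) = π x * g x * (Qm P xstar x y * g y)
    by_cases hx : x = xstar
    · simp [hw, hx, Qrow0]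
    · by_cases hy : y = xstar
      · simp [hw, hy, Qcol0]
      · have hQ : Qm P xstar x y = P x y := by rw [Qm_apply]; simp [hx, hy]
        rw [hQ]
        simp only [hw, if_neg hx, if_neg hy, hS, Matrix.of_apply]
        calc Real.sqrt (π x) * g x * (Real.sqrt (π x / π y) * P x y * (Real.sqrt (π y) * g y))
            = (Real.sqrt (π x) * g x) * (Real.sqrt (π x / π y) * P x y)
              * (Real.sqrt (π y) * g y) := by ring
          _ = π x * P x y * (g x * g y) := sqrt_entry_mul h x y (g x) (g y)
          _ = π x * g x * (P x y * g y) := by ring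
  rw [← key]
  exact h0'

lemma ip_comm (π g h' : X → ℝ) : ip π g h' = ip π h' g := by
  unfold ip; exact Finset.sum_congr rfl fun x _ => by ring

lemma ip_nonneg_sq (h : H π P xstar V α) (g : X → ℝ) : 0 ≤ ip π g g := by
  unfold ip
  exact Finset.sum_nonneg fun x _ => by
    have := (h.πpos x).le
    nlinarith [sq_nonneg (g x)]

lemma app_mul (M N : Matrix X X ℝ) (g : X → ℝ) (x : X) :
    app (M * N) g x = app M (app N g) x := by
  unfold app
  simp only [Matrix.mul_apply, Finset.sum_mul]
  rw [Finset.sum_comm]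
  refine Finset.sum_congr rfl fun z _ => ?_
  rw [Finset.mul_sum]
  exact Finset.sum_congr rfl fun y _ => by ring

lemma ip_adj (h : H π P xstar V α) (t : ℕ) (g h' : X → ℝ) :
    ip π g (app (Qm P xstar ^ t) h') = ip π h' (app (Qm P xstar ^ t) g) := by
  unfold ip app
  have e1 : ∀ x, π x * g x * ∑ y, (Qm P xstar ^ t) x y * h' y
      = ∑ y, (π x * (Qm P xstar ^ t) x y) * (g x * h' y) := by
    intro x; rw [Finset.mul_sum]; exact Finset.sum_congr rfl fun y _ => by ring
  have e2 : ∀ x, π x * h' x * ∑ y, (Qm P xstar ^ t) x y * g y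
      = ∑ y, (π x * (Qm P xstar ^ t) x y) * (h' x * g y) := by
    intro x; rw [Finset.mul_sum]; exact Finset.sum_congr rfl fun y _ => by ring
  simp only [e1, e2]
  rw [Finset.sum_comm]
  refine Finset.sum_congr rfl fun x _ => Finset.sum_congr rfl fun y _ => ?_
  rw [Qpow_rev h]
  ring

/-- Cauchy–Schwarz for the taboo form. -/
lemma q_cs (h : H π P xstar V α) (v w : X → ℝ) :
    (ip π v (app (Qm P xstar) w)) ^ 2
      ≤ ip π v (app (Qm P xstar) v) * ip π w (app (Qm P xstar) w) := by
  set Q := Qm P xstar with hQdef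
  have hbil : ∀ t : ℝ, ip π (fun x => w x + t * v x) (app Q (fun x => w x + t * v x))
      = ip π v (app Q v) * (t * t) + (2 * ip π v (app Q w)) * t + ip π w (app Q w) := by
    intro t
    have hsym : ip π w (app Q v) = ip π v (app Q w) := by
      have := ip_adj h 1 w v
      simpa [pow_one] using this
    unfold ip app
    have expand : ∀ x, π x * (w x + t * v x) * (∑ y, Q x y * (w y + t * v y))
        = (π x * v x * ∑ y, Q x y * v y) * (t * t)
          + ((π x * v x * ∑ y, Q x y * w y) + (π x * w x * ∑ y, Q x y * v y)) * t
          + π x * w x * ∑ y, Q x y * w y := by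
      intro x
      have hs : ∑ y, Q x y * (w y + t * v y)
          = (∑ y, Q x y * w y) + t * ∑ y, Q x y * v y := by
        rw [Finset.mul_sum, ← Finset.sum_add_distrib]
        exact Finset.sum_congr rfl fun y _ => by ring
      rw [hs]; ring
    simp only [expand]
    rw [Finset.sum_add_distrib, Finset.sum_add_distrib]
    have eB : ∑ x, (π x * v x * (∑ y, Q x y * w y) + π x * w x * (∑ y, Q x y * v y)) * t
        = ((∑ x, π x * v x * ∑ y, Q x y * w y) + (∑ x, π x * w x * ∑ y, Q x y * v y)) * t := by
      rw [← Finset.sum_mul, Finset.sum_add_distrib]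
    rw [eB, ← Finset.sum_mul]
    have hsym' : (∑ x, π x * w x * ∑ y, Q x y * v y) = ∑ x, π x * v x * ∑ y, Q x y * w y := by
      have h2 := hsym; unfold ip app at h2; exact h2
    rw [hsym']; ring
  have hquad : ∀ t : ℝ, 0 ≤ ip π v (app Q v) * (t * t) + (2 * ip π v (app Q w)) * t
      + ip π w (app Q w) := by
    intro t
    rw [← hbil t]
    exact qform_nn h _
  have hd := discrim_le_zero hquad
  rw [discrim] at hd
  nlinarith [hd]

/-- `Q² ⪯ α Q` on the form level. -/
lemma qsq (h : H π P xstar V α) (v : X → ℝ) :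
    ip π v (app (Qm P xstar) (app (Qm P xstar) v)) ≤ α * ip π v (app (Qm P xstar) v) := by
  set Q := Qm P xstar with hQdef
  set Qv := app Q v with hQv
  have hA : ip π v (app Q Qv) = ip π Qv Qv := by
    have h1 := ip_adj h 1 v Qv
    simp only [pow_one] at h1
    rw [h1]
  have hAnn : 0 ≤ ip π Qv Qv := ip_nonneg_sq h Qv
  have hray : ip π Qv (app Q Qv) ≤ α * ip π Qv Qv := by
    have h1 := rayleigh h Qv
    have h2 : ∑ x, π x * oneE xstar x * Qv x ^ 2 ≤ ∑ x, π x * Qv x ^ 2 := by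
      refine Finset.sum_le_sum fun x _ => ?_
      have h1' : oneE xstar x ≤ 1 := by unfold oneE; split <;> norm_num
      have key : 0 ≤ π x * ((1 - oneE xstar x) * Qv x ^ 2) :=
        mul_nonneg (h.πpos x).le (mul_nonneg (by linarith) (sq_nonneg _))
      nlinarith [key]
    have h3 : ip π Qv Qv = ∑ x, π x * Qv x ^ 2 := by
      unfold ip; exact Finset.sum_congr rfl fun x _ => by ring
    rw [h3]
    calc ip π Qv (app Q Qv) ≤ α * ∑ x, π x * oneE xstar x * Qv x ^ 2 := h1
      _ ≤ α * ∑ x, π x * Qv x ^ 2 := by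
          exact mul_le_mul_of_nonneg_left h2 h.α0.le
  have hcs := q_cs h v Qv
  have hvQv : 0 ≤ ip π v (app Q v) := qform_nn h v
  rcases eq_or_lt_of_le hAnn with heq | hpos
  · rw [hA, ← heq]
    exact mul_nonneg h.α0.le hvQv
  · -- (ip v (Q Qv))^2 ≤ ip v Qv * ip Qv (Q Qv) ≤ ip v Qv * α * A, and ip v (Q Qv) = A
    rw [hA]
    nlinarith [hcs, hray, hA, hpos, hvQv]

lemma Spow (h : H π P xstar V α) (j : ℕ) :
    ((Matrix.of fun x y => Real.sqrt (π x / π y) * P x y) ^ j)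
      = Matrix.of fun x y => Real.sqrt (π x / π y) * (P ^ j) x y := by
  induction j with
  | zero =>
    ext x y
    simp only [pow_zero, Matrix.of_apply]
    by_cases hxy : x = y
    · subst hxy
      simp [Matrix.one_apply, Real.sqrt_div (h.πpos x).le, div_self (h.πpos x).ne']
    · simp [Matrix.one_apply, hxy]
  | succ s ih =>
    ext x y
    rw [pow_succ, ih, Matrix.mul_apply]
    simp only [Matrix.of_apply]
    rw [pow_succ, Matrix.mul_apply, Finset.mul_sum]
    refine Finset.sum_congr rfl fun z _ => ?_
    have hx := h.πpos x; have hy := h.πpos y; have hz := h.πpos z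
    have key : Real.sqrt (π x / π z) * Real.sqrt (π z / π y) = Real.sqrt (π x / π y) := by
      rw [← Real.sqrt_mul (by positivity)]
      congr 1
      field_simp
    calc Real.sqrt (π x / π z) * (P ^ s) x z * (Real.sqrt (π z / π y) * P z y)
        = (Real.sqrt (π x / π z) * Real.sqrt (π z / π y)) * ((P ^ s) x z * P z y) := by ring
      _ = Real.sqrt (π x / π y) * ((P ^ s) x z * P z y) := by rw [key]

lemma psd_diag (h : H π P xstar V α) (j : ℕ) : π xstar ≤ (P ^ j) xstar xstar := by
  set f : X → ℝ := fun x => (if x = xstar then 1 else 0) - π xstar with hf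
  set w : X → ℝ := fun x => Real.sqrt (π x) * f x with hw
  have hpsdj := (h.psd.pow j).dotProduct_mulVec_nonneg w
  rw [Spow h j] at hpsdj
  have key : star w ⬝ᵥ (Matrix.of fun x y =>
      Real.sqrt (π x / π y) * (P ^ j) x y).mulVec w
      = ∑ x, ∑ y, π x * (P ^ j) x y * (f x * f y) := by
    show w ⬝ᵥ _ = _
    rw [dotProduct]
    refine Finset.sum_congr rfl fun x _ => ?_
    rw [Matrix.mulVec, dotProduct, Finset.mul_sum]
    refine Finset.sum_congr rfl fun y _ => ?_
    show w x * ((Matrix.of fun x y => Real.sqrt (π x / π y) * (P ^ j) x y) x y * w y)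
        = π x * (P ^ j) x y * (f x * f y)
    simp only [hw, Matrix.of_apply]
    calc Real.sqrt (π x) * f x * (Real.sqrt (π x / π y) * (P ^ j) x y * (Real.sqrt (π y) * f y))
        = (Real.sqrt (π x) * f x) * (Real.sqrt (π x / π y) * (P ^ j) x y)
          * (Real.sqrt (π y) * f y) := by ring
      _ = π x * (P ^ j) x y * (f x * f y) := by
          have := h
          -- reuse sqrt_entry_mul shape with P^j playing the matrix role
          have hx := h.πpos x
          have hy := h.πpos y
          have h2 : Real.sqrt (π y) ≠ 0 := ne_of_gt (Real.sqrt_pos.mpr hy)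
          have h1 : Real.sqrt (π x) * Real.sqrt (π x) = π x := Real.mul_self_sqrt hx.le
          rw [Real.sqrt_div hx.le]
          calc (Real.sqrt (π x) * f x) * (Real.sqrt (π x) / Real.sqrt (π y) * (P ^ j) x y)
                * (Real.sqrt (π y) * f y)
              = (Real.sqrt (π x) * Real.sqrt (π x)) * (Real.sqrt (π y) / Real.sqrt (π y))
                * ((P ^ j) x y * (f x * f y)) := by ring
            _ = π x * 1 * ((P ^ j) x y * (f x * f y)) := by rw [h1, div_self h2]
            _ = π x * (P ^ j) x y * (f x * f y) := by ring
  rw [key] at hpsdj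
  -- expand the quadratic form
  have expand : ∑ x, ∑ y, π x * (P ^ j) x y * (f x * f y)
      = π xstar * ((P ^ j) xstar xstar - π xstar) := by
    have e1 : ∀ x, ∑ y, π x * (P ^ j) x y * (f x * f y)
        = π x * f x * ((P ^ j) x xstar - π xstar) := by
      intro x
      have : ∀ y, π x * (P ^ j) x y * (f x * f y)
          = (π x * f x) * ((P ^ j) x y * (if y = xstar then 1 else 0))
            - (π x * f x * π xstar) * (P ^ j) x y := by
        intro y; simp only [hf]; ring
      rw [Finset.sum_congr rfl fun y _ => this y, Finset.sum_sub_distrib,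
        ← Finset.mul_sum, ← Finset.mul_sum]
      have hs1 : ∑ y, (P ^ j) x y * (if y = xstar then 1 else 0) = (P ^ j) x xstar := by
        rw [Finset.sum_congr rfl (fun y _ => by
          rw [mul_ite, mul_one, mul_zero])]
        exact Finset.sum_ite_eq' Finset.univ xstar (fun y => (P ^ j) x y) |>.trans (by simp)
      rw [hs1, Ppow_row h]
      ring
    rw [Finset.sum_congr rfl fun x _ => e1 x]
    have : ∀ x, π x * f x * ((P ^ j) x xstar - π xstar)
        = (if x = xstar then 1 else 0) * (π x * ((P ^ j) x xstar - π xstar))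
          - π xstar * (π x * (P ^ j) x xstar) + π xstar * π xstar * π x := by
      intro x; simp only [hf]; ring
    rw [Finset.sum_congr rfl fun x _ => this x]
    rw [Finset.sum_add_distrib, Finset.sum_sub_distrib, ← Finset.mul_sum, ← Finset.mul_sum]
    have hs2 : ∑ x, (if x = xstar then 1 else 0) * (π x * ((P ^ j) x xstar - π xstar))
        = π xstar * ((P ^ j) xstar xstar - π xstar) := by
      rw [Finset.sum_congr rfl (fun x _ => by rw [ite_mul, one_mul, zero_mul])]
      exact (Finset.sum_ite_eq' Finset.univ xstar _).trans (by simp)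
    rw [hs2, Ppow_stat h, h.πsum]
    ring
  rw [expand] at hpsdj
  nlinarith [h.πpos xstar, hpsdj]

lemma sum_ite_zero (xstar : X) (f : X → ℝ) :
    ∑ x, (if x = xstar then 0 else f x) = (∑ x, f x) - f xstar := by
  have : ∀ x, (if x = xstar then 0 else f x) = f x - (if x = xstar then f x else 0) := by
    intro x; split <;> ring
  rw [Finset.sum_congr rfl fun x _ => this x, Finset.sum_sub_distrib,
    Finset.sum_ite_eq' Finset.univ xstar f]
  simp

lemma app_one (g : X → ℝ) (x : X) : app (1 : Matrix X X ℝ) g x = g x := by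
  unfold app
  simp [Matrix.one_apply]

lemma lemmaB (h : H π P xstar V α) : 1 - π xstar ≤ α := by
  have hray := rayleigh h (oneE xstar)
  have hRHS : ∑ x, π x * oneE xstar x * oneE xstar x ^ 2 = 1 - π xstar := by
    have : ∀ x, π x * oneE xstar x * oneE xstar x ^ 2 = (if x = xstar then 0 else π x) := by
      intro x; unfold oneE; split <;> ring
    rw [Finset.sum_congr rfl fun x _ => this x, sum_ite_zero, h.πsum]
  have hLHS : ip π (oneE xstar) (app (Qm P xstar) (oneE xstar))
      = (1 - π xstar) - (π xstar - π xstar * P xstar xstar) := by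
    unfold ip app
    have hinner : ∀ x, x ≠ xstar → ∑ y, Qm P xstar x y * oneE xstar y = 1 - P x xstar := by
      intro x hx
      have : ∀ y, Qm P xstar x y * oneE xstar y = (if y = xstar then 0 else P x y) := by
        intro y; rw [Qm_apply]; unfold oneE
        by_cases hy : y = xstar <;> simp [hx, hy]
      rw [Finset.sum_congr rfl fun y _ => this y, sum_ite_zero, h.Prow]
    have hterm : ∀ x, π x * oneE xstar x * ∑ y, Qm P xstar x y * oneE xstar y
        = (if x = xstar then 0 else π x * (1 - P x xstar)) := by
      intro x
      by_cases hx : x = xstar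
      · simp [hx, oneE]
      · rw [hinner x hx]
        simp [oneE, hx]
    rw [Finset.sum_congr rfl fun x _ => hterm x, sum_ite_zero]
    have : ∑ x, π x * (1 - P x xstar) = 1 - π xstar := by
      have e : ∀ x, π x * (1 - P x xstar) = π x - π x * P x xstar := fun x => by ring
      rw [Finset.sum_congr rfl fun x _ => e x, Finset.sum_sub_distrib, h.πsum, h.stat xstar]
    rw [this]
    ring
  have hdiag : π xstar ≤ P xstar xstar := by
    have := psd_diag h 1
    simpa [pow_one] using this
  have hπle1 : π xstar ≤ 1 := by
    rw [← h.πsum]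
    exact Finset.single_le_sum (fun x _ => (h.πpos x).le) (Finset.mem_univ xstar)
  rw [hLHS, hRHS] at hray
  rcases le_or_gt (1 - π xstar) 0 with hle | hpos
  · linarith [h.α0]
  · have hsq : (1 - π xstar) * (1 - π xstar) ≤ α * (1 - π xstar) := by
      nlinarith [h.πpos xstar]
    exact le_of_mul_le_mul_right (by linarith [hsq]) hpos

/-- `B(u) = ⟨1', Q^u 1'⟩_π`. -/
def Bf (π : X → ℝ) (P : Matrix X X ℝ) (xstar : X) (u : ℕ) : ℝ :=
  ip π (oneE xstar) (app (Qm P xstar ^ u) (oneE xstar))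

lemma B0 (h : H π P xstar V α) : Bf π P xstar 0 = 1 - π xstar := by
  unfold Bf
  rw [pow_zero]
  have happ : ∀ x, app (1 : Matrix X X ℝ) (oneE xstar) x = oneE xstar x := app_one _
  unfold ip
  rw [Finset.sum_congr rfl fun x _ => by rw [happ x]]
  have : ∀ x, π x * oneE xstar x * oneE xstar x = (if x = xstar then 0 else π x) := by
    intro x; unfold oneE; split <;> ring
  rw [Finset.sum_congr rfl fun x _ => this x, sum_ite_zero, h.πsum]

lemma Bsplit (h : H π P xstar V α) (a b : ℕ) :
    Bf π P xstar (a + b)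
      = ip π (app (Qm P xstar ^ a) (oneE xstar)) (app (Qm P xstar ^ b) (oneE xstar)) := by
  unfold Bf
  have e : app (Qm P xstar ^ (a + b)) (oneE xstar)
      = app (Qm P xstar ^ a) (app (Qm P xstar ^ b) (oneE xstar)) := by
    funext x
    rw [pow_add]
    exact app_mul _ _ _ x
  rw [e, ip_adj h a, ip_comm]

lemma ray_ip (h : H π P xstar V α) (g : X → ℝ) :
    ip π g (app (Qm P xstar) g) ≤ α * ip π g g := by
  have h1 := rayleigh h g
  have h2 : ∑ x, π x * oneE xstar x * g x ^ 2 ≤ ∑ x, π x * g x ^ 2 := by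
    refine Finset.sum_le_sum fun x _ => ?_
    have h1' : oneE xstar x ≤ 1 := by unfold oneE; split <;> norm_num
    have h0' : (0:ℝ) ≤ oneE xstar x := by unfold oneE; split <;> norm_num
    have key : 0 ≤ π x * ((1 - oneE xstar x) * g x ^ 2) :=
      mul_nonneg (h.πpos x).le (mul_nonneg (by linarith) (sq_nonneg _))
    nlinarith [key]
  have h3 : ip π g g = ∑ x, π x * g x ^ 2 := by
    unfold ip; exact Finset.sum_congr rfl fun x _ => by ring
  rw [h3]
  calc ip π g (app (Qm P xstar) g) ≤ α * ∑ x, π x * oneE xstar x * g x ^ 2 := h1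
    _ ≤ α * ∑ x, π x * g x ^ 2 := mul_le_mul_of_nonneg_left h2 h.α0.le

lemma Bstep (h : H π P xstar V α) (u : ℕ) :
    Bf π P xstar (u + 1) ≤ α * Bf π P xstar u := by
  set Q := Qm P xstar with hQdef
  rcases Nat.even_or_odd u with ⟨m, hm⟩ | ⟨m, hm⟩
  · -- u = m + m
    set vm : X → ℝ := app (Q ^ m) (oneE xstar) with hvm
    have e1 : Bf π P xstar (u + 1) = ip π vm (app Q vm) := by
      have : u + 1 = m + (m + 1) := by omega
      rw [this, Bsplit h m (m + 1)]
      have e2 : app (Q ^ (m + 1)) (oneE xstar) = app Q vm := by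
        funext x
        rw [pow_succ']
        exact app_mul _ _ _ x
      rw [e2]
    have e3 : Bf π P xstar u = ip π vm vm := by
      rw [hm]
      exact Bsplit h m m
    rw [e1, e3]
    exact ray_ip h vm
  · -- u = 2 * m + 1
    set vm : X → ℝ := app (Q ^ m) (oneE xstar) with hvm
    have e1 : Bf π P xstar (u + 1) = ip π vm (app Q (app Q vm)) := by
      have : u + 1 = m + (m + 2) := by omega
      rw [this, Bsplit h m (m + 2)]
      have e2 : app (Q ^ (m + 2)) (oneE xstar) = app Q (app Q vm) := by
        funext x
        have : Q ^ (m + 2) = Q * (Q * Q ^ m) := by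
          rw [← pow_succ', ← pow_succ']
        rw [this, app_mul]
        congr 1
        funext y
        exact app_mul _ _ _ y
      rw [e2]
    have e3 : Bf π P xstar (m + (m + 1)) = ip π vm (app Q vm) := by
      rw [Bsplit h m (m + 1)]
      have e2 : app (Q ^ (m + 1)) (oneE xstar) = app Q vm := by
        funext x
        rw [pow_succ']
        exact app_mul _ _ _ x
      rw [e2]
    have hmu : m + (m + 1) = u := by omega
    rw [e1, ← hmu, e3]
    exact qsq h vm

lemma Bbound (h : H π P xstar V α) (u : ℕ) : Bf π P xstar u ≤ α ^ (u + 1) := by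
  induction u with
  | zero =>
    rw [B0 h, pow_one]
    exact lemmaB h
  | succ s ih =>
    calc Bf π P xstar (s + 1) ≤ α * Bf π P xstar s := Bstep h s
      _ ≤ α * α ^ (s + 1) := mul_le_mul_of_nonneg_left ih h.α0.le
      _ = α ^ (s + 1 + 1) := by rw [pow_succ]; ring

def qEf (P : Matrix X X ℝ) (xstar : X) : X → ℝ := fun z => if z = xstar then 0 else P xstar z
def pEf (P : Matrix X X ℝ) (xstar : X) : X → ℝ := fun z => if z = xstar then 0 else P z xstar
def πEf (π : X → ℝ) (xstar : X) : X → ℝ := fun x => if x = xstar then 0 else π x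
def gv (P : Matrix X X ℝ) (xstar : X) (j : ℕ) : X → ℝ := rowAct (Qm P xstar ^ j) (qEf P xstar)
def rπv (π : X → ℝ) (P : Matrix X X ℝ) (xstar : X) (t : ℕ) : X → ℝ :=
  rowAct (Qm P xstar ^ t) (πEf π xstar)
def fv (P : Matrix X X ℝ) (xstar : X) (j : ℕ) : X → ℝ := app (Qm P xstar ^ j) (pEf P xstar)
def qt1 (P : Matrix X X ℝ) (xstar : X) (t : ℕ) : X → ℝ := fun x => ∑ y, (Qm P xstar ^ t) x y

lemma rowAct_one (g : X → ℝ) (y : X) : rowAct (1 : Matrix X X ℝ) g y = g y := by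
  unfold rowAct
  have : ∀ z, g z * (1 : Matrix X X ℝ) z y = (if z = y then g z else 0) := by
    intro z
    rw [Matrix.one_apply]
    by_cases hz : z = y <;> simp [hz]
  rw [Finset.sum_congr rfl fun z _ => this z, Finset.sum_ite_eq' Finset.univ y g]
  simp

lemma rowAct_pow_succ (M : Matrix X X ℝ) (t : ℕ) (g : X → ℝ) (y : X) :
    rowAct (M ^ (t + 1)) g y = ∑ w, rowAct (M ^ t) g w * M w y := by
  unfold rowAct
  rw [pow_succ]
  simp only [Matrix.mul_apply, Finset.mul_sum, Finset.sum_mul]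
  rw [Finset.sum_comm]
  exact Finset.sum_congr rfl fun w _ => Finset.sum_congr rfl fun z _ => by ring

lemma rowAct_pow_succ' (M : Matrix X X ℝ) (t : ℕ) (g : X → ℝ) (y : X) :
    rowAct (M ^ (t + 1)) g y = rowAct (M ^ t) (rowAct M g) y := by
  unfold rowAct
  rw [pow_succ']
  simp only [Matrix.mul_apply, Finset.mul_sum, Finset.sum_mul]
  rw [Finset.sum_comm]
  exact Finset.sum_congr rfl fun w _ => Finset.sum_congr rfl fun z _ => by ring

lemma gv_nn (h : H π P xstar V α) (j : ℕ) (y : X) : 0 ≤ gv P xstar j y := by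
  unfold gv rowAct
  refine Finset.sum_nonneg fun z _ => mul_nonneg ?_ (Qpow_nn h j z y)
  unfold qEf; split
  · exact le_refl 0
  · exact h.Pnn xstar z

lemma rπv_nn (h : H π P xstar V α) (t : ℕ) (y : X) : 0 ≤ rπv π P xstar t y := by
  unfold rπv rowAct
  refine Finset.sum_nonneg fun z _ => mul_nonneg ?_ (Qpow_nn h t z y)
  unfold πEf; split
  · exact le_refl 0
  · exact (h.πpos z).le

lemma fv_nn (h : H π P xstar V α) (j : ℕ) (x : X) : 0 ≤ fv P xstar j x := by
  unfold fv app
  refine Finset.sum_nonneg fun z _ => mul_nonneg (Qpow_nn h j x z) ?_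
  unfold pEf; split
  · exact le_refl 0
  · exact h.Pnn z xstar

lemma baseRel (h : H π P xstar V α) (y : X) :
    πEf π xstar y = π xstar * qEf P xstar y + rowAct (Qm P xstar) (πEf π xstar) y := by
  by_cases hy : y = xstar
  · have h1 : πEf π xstar y = 0 := by unfold πEf; simp [hy]
    have h2 : qEf P xstar y = 0 := by unfold qEf; simp [hy]
    have h3 : rowAct (Qm P xstar) (πEf π xstar) y = 0 := by
      unfold rowAct
      refine Finset.sum_eq_zero fun z _ => ?_
      rw [hy, Qcol0, mul_zero]
    rw [h1, h2, h3, mul_zero, zero_add]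
  · have he : rowAct (Qm P xstar) (πEf π xstar) y
        = ∑ x ∈ Finset.univ.erase xstar, π x * P x y := by
      unfold rowAct
      calc ∑ x, πEf π xstar x * Qm P xstar x y
          = πEf π xstar xstar * Qm P xstar xstar y
            + ∑ x ∈ Finset.univ.erase xstar, πEf π xstar x * Qm P xstar x y :=
            (Finset.add_sum_erase _ _ (Finset.mem_univ xstar)).symm
        _ = ∑ x ∈ Finset.univ.erase xstar, π x * P x y := by
            have h1 : πEf π xstar xstar * Qm P xstar xstar y = 0 := by
              unfold πEf; simp
            rw [h1, zero_add]
            refine Finset.sum_congr rfl fun x hx => ?_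
            have hxne := (Finset.mem_erase.mp hx).1
            rw [Qm_apply]
            unfold πEf
            simp [hxne, hy]
    have hsplit : ∑ x, π x * P x y
        = π xstar * P xstar y + ∑ x ∈ Finset.univ.erase xstar, π x * P x y :=
      (Finset.add_sum_erase _ _ (Finset.mem_univ xstar)).symm
    have hπy : πEf π xstar y = π y := by unfold πEf; simp [hy]
    have hqy : qEf P xstar y = P xstar y := by unfold qEf; simp [hy]
    rw [hπy, hqy, he, ← h.stat y, hsplit]

lemma stat_decomp (h : H π P xstar V α) (t : ℕ) (y : X) :
    πEf π xstar y
      = π xstar * (∑ j ∈ Finset.range t, gv P xstar j y) + rπv π P xstar t y := by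
  induction t with
  | zero =>
    unfold rπv
    rw [pow_zero, rowAct_one, Finset.sum_range_zero, mul_zero, zero_add]
  | succ s ih =>
    have hstep : rπv π P xstar s y
        = π xstar * gv P xstar s y + rπv π P xstar (s + 1) y := by
      unfold rπv
      rw [rowAct_pow_succ']
      unfold gv rowAct
      rw [Finset.mul_sum, ← Finset.sum_add_distrib]
      refine Finset.sum_congr rfl fun z _ => ?_
      have hb := baseRel h z
      unfold rowAct at hb
      rw [hb]
      ring
    rw [Finset.sum_range_succ, ih, hstep]
    ring

lemma gv0 (y : X) : gv P xstar 0 y = qEf P xstar y := by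
  unfold gv
  rw [pow_zero, rowAct_one]

lemma gv_succ_P (h : H π P xstar V α) (j : ℕ) {y : X} (hy : y ≠ xstar) :
    ∑ z ∈ Finset.univ.erase xstar, gv P xstar j z * P z y = gv P xstar (j + 1) y := by
  have hQP : ∀ z, z ∈ Finset.univ.erase xstar → gv P xstar j z * P z y
      = gv P xstar j z * Qm P xstar z y := by
    intro z hz
    rw [Qm_apply]
    simp [(Finset.mem_erase.mp hz).1, hy]
  rw [Finset.sum_congr rfl hQP]
  have hfull : ∑ z, gv P xstar j z * Qm P xstar z y
      = gv P xstar j xstar * Qm P xstar xstar y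
        + ∑ z ∈ Finset.univ.erase xstar, gv P xstar j z * Qm P xstar z y :=
    (Finset.add_sum_erase _ _ (Finset.mem_univ xstar)).symm
  rw [Qrow0] at hfull
  rw [mul_zero, zero_add] at hfull
  rw [← hfull]
  unfold gv
  rw [rowAct_pow_succ]

lemma atom_decomp (h : H π P xstar V α) (t : ℕ) :
    ∀ y, y ≠ xstar →
      (P ^ t) xstar y
        = ∑ j ∈ Finset.range t, (P ^ (t - 1 - j)) xstar xstar * gv P xstar j y := by
  induction t with
  | zero =>
    intro y hy
    rw [pow_zero, Matrix.one_apply_ne (Ne.symm hy)]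
    simp
  | succ s ih =>
    intro y hy
    have hmul : (P ^ (s + 1)) xstar y = ∑ z, (P ^ s) xstar z * P z y := by
      rw [pow_succ, Matrix.mul_apply]
    rw [hmul]
    have hsplit : ∑ z, (P ^ s) xstar z * P z y
        = (P ^ s) xstar xstar * P xstar y
          + ∑ z ∈ Finset.univ.erase xstar, (P ^ s) xstar z * P z y :=
      (Finset.add_sum_erase _ _ (Finset.mem_univ xstar)).symm
    rw [hsplit]
    have hsub : ∑ z ∈ Finset.univ.erase xstar, (P ^ s) xstar z * P z y
        = ∑ j ∈ Finset.range s, (P ^ (s - 1 - j)) xstar xstar * gv P xstar (j + 1) y := by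
      calc ∑ z ∈ Finset.univ.erase xstar, (P ^ s) xstar z * P z y
          = ∑ z ∈ Finset.univ.erase xstar,
              (∑ j ∈ Finset.range s, (P ^ (s - 1 - j)) xstar xstar * gv P xstar j z) * P z y := by
            refine Finset.sum_congr rfl fun z hz => ?_
            rw [ih z (Finset.mem_erase.mp hz).1]
        _ = ∑ j ∈ Finset.range s, (P ^ (s - 1 - j)) xstar xstar
              * ∑ z ∈ Finset.univ.erase xstar, gv P xstar j z * P z y := by
            simp only [Finset.sum_mul, Finset.mul_sum]
            rw [Finset.sum_comm]
            exact Finset.sum_congr rfl fun j _ => Finset.sum_congr rfl fun z _ => by ring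
        _ = ∑ j ∈ Finset.range s, (P ^ (s - 1 - j)) xstar xstar * gv P xstar (j + 1) y := by
            exact Finset.sum_congr rfl fun j _ => by rw [gv_succ_P h j hy]
    rw [hsub]
    rw [Finset.sum_range_succ']
    have h0 : (P ^ (s + 1 - 1 - 0)) xstar xstar * gv P xstar 0 y
        = (P ^ s) xstar xstar * P xstar y := by
      rw [gv0]
      unfold qEf
      simp [hy]
    have hrest : ∀ j ∈ Finset.range s,
        (P ^ (s + 1 - 1 - (j + 1))) xstar xstar * gv P xstar (j + 1) y
          = (P ^ (s - 1 - j)) xstar xstar * gv P xstar (j + 1) y := by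
      intro j hj
      have he : s + 1 - 1 - (j + 1) = s - 1 - j := by omega
      rw [he]
    rw [Finset.sum_congr rfl hrest, h0]
    ring


lemma πE_eq (π : X → ℝ) (xstar z : X) : πEf π xstar z = π z * oneE xstar z := by
  unfold πEf oneE; split <;> ring

lemma qt1_split (t : ℕ) (x : X) :
    qt1 P xstar t x
      = (∑ y, (Qm P xstar ^ t) x y * oneE xstar y) + (Qm P xstar ^ t) x xstar := by
  unfold qt1
  have : ∀ y, (Qm P xstar ^ t) x y
      = (Qm P xstar ^ t) x y * oneE xstar y
        + (if y = xstar then (Qm P xstar ^ t) x y else 0) := by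
    intro y; unfold oneE; split <;> ring
  rw [Finset.sum_congr rfl fun y _ => this y, Finset.sum_add_distrib,
    Finset.sum_ite_eq' Finset.univ xstar]
  simp

lemma Qpow_col_star (h : H π P xstar V α) (t : ℕ) (z : X) :
    πEf π xstar z * (Qm P xstar ^ t) z xstar = 0 := by
  cases t with
  | zero =>
    rw [pow_zero, Matrix.one_apply]
    by_cases hz : z = xstar
    · have : πEf π xstar z = 0 := by unfold πEf; simp [hz]
      rw [this, zero_mul]
    · rw [if_neg hz, mul_zero]
  | succ s =>
    rw [Qpow_col0 h s z, mul_zero]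

lemma rπ_total (h : H π P xstar V α) (t : ℕ) :
    ∑ y, rπv π P xstar t y = Bf π P xstar t := by
  unfold rπv rowAct Bf ip app
  rw [Finset.sum_comm]
  have : ∀ z, ∑ y, πEf π xstar z * (Qm P xstar ^ t) z y
      = π z * oneE xstar z * (∑ y, (Qm P xstar ^ t) z y * oneE xstar y) := by
    intro z
    rw [← Finset.mul_sum]
    have hq := qt1_split (P := P) (xstar := xstar) t z
    unfold qt1 at hq
    rw [hq, mul_add, Qpow_col_star h t z, add_zero, πE_eq, Finset.mul_sum]
  exact Finset.sum_congr rfl fun z _ => this z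

lemma atom_diff_le (h : H π P xstar V α) (t : ℕ) {y : X} (hy : y ≠ xstar) :
    π y - (P ^ t) xstar y ≤ rπv π P xstar t y := by
  have h1 := stat_decomp h t y
  have h2 := atom_decomp h t y hy
  have hπy : πEf π xstar y = π y := by unfold πEf; simp [hy]
  rw [hπy] at h1
  have hterm : ∑ j ∈ Finset.range t,
      (π xstar - (P ^ (t - 1 - j)) xstar xstar) * gv P xstar j y ≤ 0 :=
    Finset.sum_nonpos fun j _ =>
      mul_nonpos_of_nonpos_of_nonneg (by linarith [psd_diag h (t - 1 - j)]) (gv_nn h j y)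
  have he : π y - (P ^ t) xstar y
      = (∑ j ∈ Finset.range t,
          (π xstar - (P ^ (t - 1 - j)) xstar xstar) * gv P xstar j y)
        + rπv π P xstar t y := by
    have hsum : ∑ j ∈ Finset.range t,
        (π xstar - (P ^ (t - 1 - j)) xstar xstar) * gv P xstar j y
        = π xstar * (∑ j ∈ Finset.range t, gv P xstar j y)
          - ∑ j ∈ Finset.range t, (P ^ (t - 1 - j)) xstar xstar * gv P xstar j y := by
      rw [Finset.mul_sum, ← Finset.sum_sub_distrib]
      exact Finset.sum_congr rfl fun j _ => by ring
    rw [h1, h2, hsum]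
    ring
  rw [he]
  linarith

lemma atom_sum_le (h : H π P xstar V α) (t : ℕ) (A : Finset X) :
    ∑ y ∈ A, (π y - (P ^ t) xstar y) ≤ α ^ (t + 1) := by
  have hstep1 : ∑ y ∈ A, (π y - (P ^ t) xstar y)
      ≤ ∑ y ∈ A.erase xstar, (π y - (P ^ t) xstar y) := by
    by_cases hx : xstar ∈ A
    · rw [← Finset.add_sum_erase A _ hx]
      have := psd_diag h t
      linarith
    · rw [Finset.erase_eq_of_notMem hx]
  have hstep2 : ∑ y ∈ A.erase xstar, (π y - (P ^ t) xstar y)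
      ≤ ∑ y ∈ A.erase xstar, rπv π P xstar t y :=
    Finset.sum_le_sum fun y hy => atom_diff_le h t (Finset.mem_erase.mp hy).1
  have hstep3 : ∑ y ∈ A.erase xstar, rπv π P xstar t y ≤ ∑ y, rπv π P xstar t y :=
    Finset.sum_le_sum_of_subset_of_nonneg (Finset.subset_univ _)
      (fun y _ _ => rπv_nn h t y)
  calc ∑ y ∈ A, (π y - (P ^ t) xstar y)
      ≤ ∑ y, rπv π P xstar t y := le_trans hstep1 (le_trans hstep2 hstep3)
    _ = Bf π P xstar t := rπ_total h t
    _ ≤ α ^ (t + 1) := Bbound h t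

lemma sum_diff_zero (h : H π P xstar V α) (t : ℕ) (x : X) :
    ∑ y, ((P ^ t) x y - π y) = 0 := by
  rw [Finset.sum_sub_distrib, Ppow_row h, h.πsum, sub_self]

lemma atom_abs (h : H π P xstar V α) (t : ℕ) (A : Finset X) :
    |∑ y ∈ A, ((P ^ t) xstar y - π y)| ≤ α ^ (t + 1) := by
  rw [abs_le]
  constructor
  · have h1 := atom_sum_le h t A
    have h2 : ∑ y ∈ A, ((P ^ t) xstar y - π y) + ∑ y ∈ A, (π y - (P ^ t) xstar y) = 0 := by
      rw [← Finset.sum_add_distrib]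
      exact Finset.sum_eq_zero fun y _ => by ring
    linarith
  · have h1 := atom_sum_le h t Aᶜ
    have h2 : ∑ y ∈ A, ((P ^ t) xstar y - π y) + ∑ y ∈ Aᶜ, ((P ^ t) xstar y - π y) = 0 := by
      rw [Finset.sum_add_sum_compl]
      exact sum_diff_zero h t xstar
    have h3 : ∑ y ∈ Aᶜ, ((P ^ t) xstar y - π y) + ∑ y ∈ Aᶜ, (π y - (P ^ t) xstar y) = 0 := by
      rw [← Finset.sum_add_distrib]
      exact Finset.sum_eq_zero fun y _ => by ring
    linarith

lemma fv0 (h : H π P xstar V α) {x : X} (hx : x ≠ xstar) : fv P xstar 0 x = P x xstar := by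
  unfold fv
  rw [pow_zero]
  have := app_one (X := X) (pEf P xstar) x
  rw [this]
  unfold pEf
  simp [hx]

lemma fv_succ (j : ℕ) (x : X) :
    fv P xstar (j + 1) x = ∑ z, Qm P xstar x z * fv P xstar j z := by
  unfold fv
  have : app (Qm P xstar ^ (j + 1)) (pEf P xstar) x
      = app (Qm P xstar) (app (Qm P xstar ^ j) (pEf P xstar)) x := by
    rw [pow_succ']
    exact app_mul _ _ _ x
  rw [this]
  rfl

lemma erase_to_Q (h : H π P xstar V α) {x : X} (hx : x ≠ xstar) (g : X → ℝ) :
    ∑ z ∈ Finset.univ.erase xstar, P x z * g z = ∑ z, Qm P xstar x z * g z := by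
  have hfull : ∑ z, Qm P xstar x z * g z
      = Qm P xstar x xstar * g xstar
        + ∑ z ∈ Finset.univ.erase xstar, Qm P xstar x z * g z :=
    (Finset.add_sum_erase _ _ (Finset.mem_univ xstar)).symm
  rw [hfull, Qcol0, zero_mul, zero_add]
  refine Finset.sum_congr rfl fun z hz => ?_
  rw [Qm_apply]
  simp [hx, (Finset.mem_erase.mp hz).1]

lemma hit_decomp (h : H π P xstar V α) (t : ℕ) :
    ∀ x, x ≠ xstar → ∀ y,
      (P ^ t) x y = (Qm P xstar ^ t) x y
        + ∑ j ∈ Finset.range t, fv P xstar j x * (P ^ (t - 1 - j)) xstar y := by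
  induction t with
  | zero =>
    intro x hx y
    simp
  | succ s ih =>
    intro x hx y
    have hmul : (P ^ (s + 1)) x y = ∑ z, P x z * (P ^ s) z y := by
      rw [pow_succ', Matrix.mul_apply]
    have hsplit : ∑ z, P x z * (P ^ s) z y
        = P x xstar * (P ^ s) xstar y
          + ∑ z ∈ Finset.univ.erase xstar, P x z * (P ^ s) z y :=
      (Finset.add_sum_erase _ _ (Finset.mem_univ xstar)).symm
    have hsub : ∑ z ∈ Finset.univ.erase xstar, P x z * (P ^ s) z y
        = (Qm P xstar ^ (s + 1)) x y
          + ∑ j ∈ Finset.range s, fv P xstar (j + 1) x * (P ^ (s - 1 - j)) xstar y := by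
      calc ∑ z ∈ Finset.univ.erase xstar, P x z * (P ^ s) z y
          = ∑ z ∈ Finset.univ.erase xstar, P x z * ((Qm P xstar ^ s) z y
              + ∑ j ∈ Finset.range s, fv P xstar j z * (P ^ (s - 1 - j)) xstar y) := by
            refine Finset.sum_congr rfl fun z hz => ?_
            rw [ih z (Finset.mem_erase.mp hz).1 y]
        _ = (∑ z ∈ Finset.univ.erase xstar, P x z * (Qm P xstar ^ s) z y)
            + ∑ z ∈ Finset.univ.erase xstar,
                P x z * ∑ j ∈ Finset.range s, fv P xstar j z * (P ^ (s - 1 - j)) xstar y := by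
            rw [← Finset.sum_add_distrib]
            exact Finset.sum_congr rfl fun z _ => by ring
        _ = (Qm P xstar ^ (s + 1)) x y
            + ∑ j ∈ Finset.range s, fv P xstar (j + 1) x * (P ^ (s - 1 - j)) xstar y := by
            congr 1
            · rw [erase_to_Q h hx, pow_succ', Matrix.mul_apply]
            · rw [erase_to_Q h hx]
              have : ∀ z, Qm P xstar x z
                  * ∑ j ∈ Finset.range s, fv P xstar j z * (P ^ (s - 1 - j)) xstar y
                  = ∑ j ∈ Finset.range s,
                      (Qm P xstar x z * fv P xstar j z) * (P ^ (s - 1 - j)) xstar y := by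
                intro z
                rw [Finset.mul_sum]
                exact Finset.sum_congr rfl fun j _ => by ring
              rw [Finset.sum_congr rfl fun z _ => this z, Finset.sum_comm]
              refine Finset.sum_congr rfl fun j _ => ?_
              rw [fv_succ, Finset.sum_mul]
    rw [hmul, hsplit, hsub, Finset.sum_range_succ']
    have h0 : fv P xstar 0 x * (P ^ (s + 1 - 1 - 0)) xstar y
        = P x xstar * (P ^ s) xstar y := by
      rw [fv0 h hx]
      norm_num
    have hrest : ∀ j ∈ Finset.range s,
        fv P xstar (j + 1) x * (P ^ (s + 1 - 1 - (j + 1))) xstar y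
          = fv P xstar (j + 1) x * (P ^ (s - 1 - j)) xstar y := by
      intro j hj
      have he : s + 1 - 1 - (j + 1) = s - 1 - j := by omega
      rw [he]
    rw [Finset.sum_congr rfl hrest, h0]
    ring

lemma mass_split (h : H π P xstar V α) (t : ℕ) {x : X} (hx : x ≠ xstar) :
    (∑ j ∈ Finset.range t, fv P xstar j x) + qt1 P xstar t x = 1 := by
  have hd := hit_decomp h t x hx
  have hsum : ∑ y, (P ^ t) x y
      = qt1 P xstar t x + ∑ y, ∑ j ∈ Finset.range t,
          fv P xstar j x * (P ^ (t - 1 - j)) xstar y := by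
    rw [Finset.sum_congr rfl fun y _ => hd y, Finset.sum_add_distrib]
    rfl
  rw [Ppow_row h] at hsum
  have h2 : ∑ y, ∑ j ∈ Finset.range t, fv P xstar j x * (P ^ (t - 1 - j)) xstar y
      = ∑ j ∈ Finset.range t, fv P xstar j x := by
    rw [Finset.sum_comm]
    refine Finset.sum_congr rfl fun j _ => ?_
    rw [← Finset.mul_sum, Ppow_row h, mul_one]
  rw [h2] at hsum
  linarith

lemma KV (h : H π P xstar V α) (t : ℕ) :
    ∀ x, x ≠ xstar → app (Qm P xstar ^ t) V x ≤ α ^ t * V x := by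
  induction t with
  | zero =>
    intro x hx
    rw [pow_zero, pow_zero, one_mul]
    exact le_of_eq (app_one V x)
  | succ s ih =>
    intro x hx
    have e : app (Qm P xstar ^ (s + 1)) V x
        = ∑ z, Qm P xstar x z * app (Qm P xstar ^ s) V z := by
      rw [show Qm P xstar ^ (s+1) = Qm P xstar * Qm P xstar ^ s from pow_succ' _ s]
      exact app_mul _ _ _ x
    rw [e]
    have hstep : ∑ z, Qm P xstar x z * app (Qm P xstar ^ s) V z
        ≤ ∑ z, Qm P xstar x z * (α ^ s * V z) := by
      refine Finset.sum_le_sum fun z _ => ?_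
      by_cases hz : z = xstar
      · rw [hz, Qcol0, zero_mul, zero_mul]
      · exact mul_le_mul_of_nonneg_left (ih z hz) (hQnn h x z)
    have hdr : ∑ z, Qm P xstar x z * (α ^ s * V z) ≤ α ^ s * (α * V x) := by
      have : ∀ z, Qm P xstar x z * (α ^ s * V z) = α ^ s * (Qm P xstar x z * V z) := by
        intro z; ring
      rw [Finset.sum_congr rfl fun z _ => this z, ← Finset.mul_sum]
      refine mul_le_mul_of_nonneg_left ?_ (pow_nonneg h.α0.le s)
      have := QV_le h x
      unfold oneE at this
      rw [if_neg hx, mul_one] at this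
      exact this
    calc ∑ z, Qm P xstar x z * app (Qm P xstar ^ s) V z
        ≤ α ^ s * (α * V x) := le_trans hstep hdr
      _ = α ^ (s + 1) * V x := by rw [pow_succ]; ring

lemma qt1_le (h : H π P xstar V α) (t : ℕ) {x : X} (hx : x ≠ xstar) :
    qt1 P xstar t x ≤ α ^ (t + 1) * V x := by
  cases t with
  | zero =>
    unfold qt1
    rw [pow_zero]
    have : ∑ y, (1 : Matrix X X ℝ) x y = 1 := by
      simp [Matrix.one_apply]
    rw [this, pow_one]
    exact one_le_αV h hx
  | succ s =>
    have h1 : qt1 P xstar (s + 1) x ≤ α * app (Qm P xstar ^ (s + 1)) V x := by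
      unfold qt1 app
      rw [Finset.mul_sum]
      refine Finset.sum_le_sum fun y _ => ?_
      by_cases hy : y = xstar
      · rw [hy, Qpow_col0 h s x]
        simp
      · have h2 : 1 ≤ α * V y := one_le_αV h hy
        have h3 : 0 ≤ (Qm P xstar ^ (s + 1)) x y := Qpow_nn h (s + 1) x y
        calc (Qm P xstar ^ (s + 1)) x y
            = (Qm P xstar ^ (s + 1)) x y * 1 := by ring
          _ ≤ (Qm P xstar ^ (s + 1)) x y * (α * V y) := by
              exact mul_le_mul_of_nonneg_left h2 h3
          _ = α * ((Qm P xstar ^ (s + 1)) x y * V y) := by ring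
    calc qt1 P xstar (s + 1) x ≤ α * app (Qm P xstar ^ (s + 1)) V x := h1
      _ ≤ α * (α ^ (s + 1) * V x) :=
          mul_le_mul_of_nonneg_left (KV h (s + 1) x hx) h.α0.le
      _ = α ^ (s + 1 + 1) * V x := by rw [pow_succ]; ring

lemma Kb (h : H π P xstar V α) (t : ℕ) :
    ∀ x, x ≠ xstar →
      (∑ j ∈ Finset.range t, α ^ (t - 1 - j) * fv P xstar j x) + qt1 P xstar t x
        ≤ α ^ t * V x := by
  induction t with
  | zero =>
    intro x hx
    rw [Finset.sum_range_zero, zero_add, pow_zero, one_mul]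
    unfold qt1
    rw [pow_zero]
    have : ∑ y, (1 : Matrix X X ℝ) x y = 1 := by simp [Matrix.one_apply]
    rw [this]
    exact h.V1 x
  | succ s ih =>
    intro x hx
    have hq : qt1 P xstar (s + 1) x = ∑ z, Qm P xstar x z * qt1 P xstar s z := by
      unfold qt1
      rw [show Qm P xstar ^ (s+1) = Qm P xstar * Qm P xstar ^ s from pow_succ' _ s]
      simp only [Matrix.mul_apply, Finset.sum_mul]
      rw [Finset.sum_comm]
      exact Finset.sum_congr rfl fun z _ => by rw [Finset.mul_sum]
    have hsplit : ∑ j ∈ Finset.range (s + 1), α ^ (s + 1 - 1 - j) * fv P xstar j x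
        = α ^ s * fv P xstar 0 x
          + ∑ j ∈ Finset.range s, α ^ (s - 1 - j) * fv P xstar (j + 1) x := by
      rw [Finset.sum_range_succ']
      have hrest : ∀ j ∈ Finset.range s,
          α ^ (s + 1 - 1 - (j + 1)) * fv P xstar (j + 1) x
            = α ^ (s - 1 - j) * fv P xstar (j + 1) x := by
        intro j hj
        have he : s + 1 - 1 - (j + 1) = s - 1 - j := by omega
        rw [he]
      rw [Finset.sum_congr rfl hrest]
      norm_num
      ring
    have hbody : ∑ j ∈ Finset.range s, α ^ (s - 1 - j) * fv P xstar (j + 1) x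
          + ∑ z, Qm P xstar x z * qt1 P xstar s z
        = ∑ z, Qm P xstar x z
            * ((∑ j ∈ Finset.range s, α ^ (s - 1 - j) * fv P xstar j z) + qt1 P xstar s z) := by
      have e1 : ∀ j, α ^ (s - 1 - j) * fv P xstar (j + 1) x
          = ∑ z, Qm P xstar x z * (α ^ (s - 1 - j) * fv P xstar j z) := by
        intro j
        rw [fv_succ, Finset.mul_sum]
        exact Finset.sum_congr rfl fun z _ => by ring
      rw [Finset.sum_congr rfl fun j _ => e1 j, Finset.sum_comm]
      rw [← Finset.sum_add_distrib]
      refine Finset.sum_congr rfl fun z _ => ?_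
      rw [mul_add, Finset.mul_sum]
    have hterm : ∑ z, Qm P xstar x z
          * ((∑ j ∈ Finset.range s, α ^ (s - 1 - j) * fv P xstar j z) + qt1 P xstar s z)
        ≤ ∑ z, Qm P xstar x z * (α ^ s * V z) := by
      refine Finset.sum_le_sum fun z _ => ?_
      by_cases hz : z = xstar
      · rw [hz, Qcol0, zero_mul, zero_mul]
      · exact mul_le_mul_of_nonneg_left (ih z hz) (hQnn h x z)
    have hlast : α ^ s * fv P xstar 0 x + ∑ z, Qm P xstar x z * (α ^ s * V z)
        ≤ α ^ (s + 1) * V x := by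
      have e2 : ∑ z, Qm P xstar x z * (α ^ s * V z)
          = α ^ s * ∑ z, Qm P xstar x z * V z := by
        rw [Finset.mul_sum]
        exact Finset.sum_congr rfl fun z _ => by ring
      rw [e2, fv0 h hx]
      have hPV : P x xstar + ∑ z, Qm P xstar x z * V z ≤ α * V x := by
        have hfull : ∑ z, P x z * V z
            = P x xstar * V xstar + ∑ z ∈ Finset.univ.erase xstar, P x z * V z :=
          (Finset.add_sum_erase _ _ (Finset.mem_univ xstar)).symm
        have heq : ∑ z, Qm P xstar x z * V z = ∑ z ∈ Finset.univ.erase xstar, P x z * V z :=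
          (erase_to_Q h hx V).symm
        rw [heq]
        have := h.drift x hx
        rw [hfull, h.Vstar, mul_one] at this
        linarith
      calc α ^ s * P x xstar + α ^ s * ∑ z, Qm P xstar x z * V z
          = α ^ s * (P x xstar + ∑ z, Qm P xstar x z * V z) := by ring
        _ ≤ α ^ s * (α * V x) :=
            mul_le_mul_of_nonneg_left hPV (pow_nonneg h.α0.le s)
        _ = α ^ (s + 1) * V x := by rw [pow_succ]; ring
    calc (∑ j ∈ Finset.range (s + 1), α ^ (s + 1 - 1 - j) * fv P xstar j x)
          + qt1 P xstar (s + 1) x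
        = α ^ s * fv P xstar 0 x
          + (∑ j ∈ Finset.range s, α ^ (s - 1 - j) * fv P xstar (j + 1) x
            + ∑ z, Qm P xstar x z * qt1 P xstar s z) := by
          rw [hsplit, hq]; ring
      _ = α ^ s * fv P xstar 0 x
          + ∑ z, Qm P xstar x z
              * ((∑ j ∈ Finset.range s, α ^ (s - 1 - j) * fv P xstar j z)
                + qt1 P xstar s z) := by rw [hbody]
      _ ≤ α ^ s * fv P xstar 0 x + ∑ z, Qm P xstar x z * (α ^ s * V z) := by
          linarith [hterm]
      _ ≤ α ^ (s + 1) * V x := hlast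

lemma master_abs (h : H π P xstar V α) (t : ℕ) (x : X) (A : Finset X) :
    |∑ y ∈ A, ((P ^ t) x y - π y)| ≤ 2 * V x * α ^ (t + 1) := by
  by_cases hx : x = xstar
  · rw [hx, h.Vstar]
    have h1 := atom_abs h t A
    have h3 : 0 ≤ α ^ (t + 1) := pow_nonneg h.α0.le _
    linarith
  · set SQ := ∑ y ∈ A, (Qm P xstar ^ t) x y with hSQ
    set πA := ∑ y ∈ A, π y with hπA
    set q1 := qt1 P xstar t x with hq1
    have hd := hit_decomp h t x hx
    have hmass := mass_split h t hx
    have hDdef : ∀ j, ∑ y ∈ A, ((P ^ (t - 1 - j)) xstar y - π y)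
        = (∑ y ∈ A, (P ^ (t - 1 - j)) xstar y) - πA := fun j => Finset.sum_sub_distrib _ _
    have key : ∑ y ∈ A, ((P ^ t) x y - π y)
        = (SQ - q1 * πA)
          + ∑ j ∈ Finset.range t,
              fv P xstar j x * (∑ y ∈ A, ((P ^ (t - 1 - j)) xstar y - π y)) := by
      have e1 : ∑ y ∈ A, ((P ^ t) x y - π y)
          = SQ + (∑ y ∈ A, ∑ j ∈ Finset.range t,
              fv P xstar j x * (P ^ (t - 1 - j)) xstar y) - πA := by
        rw [Finset.sum_congr rfl fun y (_ : y ∈ A) => by rw [hd y]]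
        rw [Finset.sum_sub_distrib, Finset.sum_add_distrib]
      have e2 : ∑ y ∈ A, ∑ j ∈ Finset.range t, fv P xstar j x * (P ^ (t - 1 - j)) xstar y
          = ∑ j ∈ Finset.range t, fv P xstar j x * (∑ y ∈ A, (P ^ (t - 1 - j)) xstar y) := by
        rw [Finset.sum_comm]
        exact Finset.sum_congr rfl fun j _ => by rw [Finset.mul_sum]
      have e3 : ∑ j ∈ Finset.range t, fv P xstar j x * (∑ y ∈ A, (P ^ (t - 1 - j)) xstar y)
          = (∑ j ∈ Finset.range t,
              fv P xstar j x * (∑ y ∈ A, ((P ^ (t - 1 - j)) xstar y - π y)))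
            + (∑ j ∈ Finset.range t, fv P xstar j x) * πA := by
        rw [Finset.sum_mul, ← Finset.sum_add_distrib]
        refine Finset.sum_congr rfl fun j _ => ?_
        rw [hDdef j]
        ring
      rw [e1, e2, e3]
      have : (∑ j ∈ Finset.range t, fv P xstar j x) = 1 - q1 := by linarith
      rw [this]
      ring
    have hq1nn : 0 ≤ q1 := Finset.sum_nonneg fun y _ => Qpow_nn h t x y
    have hSQnn : 0 ≤ SQ := Finset.sum_nonneg fun y _ => Qpow_nn h t x y
    have hSQle : SQ ≤ q1 :=
      Finset.sum_le_sum_of_subset_of_nonneg (Finset.subset_univ A)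
        (fun y _ _ => Qpow_nn h t x y)
    have hπAnn : 0 ≤ πA := Finset.sum_nonneg fun y _ => (h.πpos y).le
    have hπAle : πA ≤ 1 := by
      rw [← h.πsum]
      exact Finset.sum_le_sum_of_subset_of_nonneg (Finset.subset_univ A)
        (fun y _ _ => (h.πpos y).le)
    have habs1 : |SQ - q1 * πA| ≤ q1 := by
      rw [abs_le]
      constructor
      · nlinarith
      · nlinarith
    have habs2 : |∑ j ∈ Finset.range t,
        fv P xstar j x * (∑ y ∈ A, ((P ^ (t - 1 - j)) xstar y - π y))|
        ≤ α * ∑ j ∈ Finset.range t, α ^ (t - 1 - j) * fv P xstar j x := by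
      calc |∑ j ∈ Finset.range t,
          fv P xstar j x * (∑ y ∈ A, ((P ^ (t - 1 - j)) xstar y - π y))|
          ≤ ∑ j ∈ Finset.range t,
              |fv P xstar j x * (∑ y ∈ A, ((P ^ (t - 1 - j)) xstar y - π y))| :=
            Finset.abs_sum_le_sum_abs _ _
        _ ≤ ∑ j ∈ Finset.range t, fv P xstar j x * α ^ (t - 1 - j + 1) := by
            refine Finset.sum_le_sum fun j _ => ?_
            rw [abs_mul, abs_of_nonneg (fv_nn h j x)]
            exact mul_le_mul_of_nonneg_left (atom_abs h (t - 1 - j) A) (fv_nn h j x)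
        _ = α * ∑ j ∈ Finset.range t, α ^ (t - 1 - j) * fv P xstar j x := by
            rw [Finset.mul_sum]
            refine Finset.sum_congr rfl fun j _ => ?_
            rw [pow_succ]
            ring
    have hKb := Kb h t x hx
    have hqle := qt1_le h t hx
    calc |∑ y ∈ A, ((P ^ t) x y - π y)|
        ≤ |SQ - q1 * πA| + |∑ j ∈ Finset.range t,
            fv P xstar j x * (∑ y ∈ A, ((P ^ (t - 1 - j)) xstar y - π y))| := by
          rw [key]
          exact abs_add_le _ _
      _ ≤ q1 + α * ∑ j ∈ Finset.range t, α ^ (t - 1 - j) * fv P xstar j x := by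
          exact add_le_add habs1 habs2
      _ ≤ q1 + α * (α ^ t * V x - q1) := by
          have : ∑ j ∈ Finset.range t, α ^ (t - 1 - j) * fv P xstar j x
              ≤ α ^ t * V x - q1 := by linarith [hKb]
          nlinarith [h.α0.le]
      _ = α ^ (t + 1) * V x + (1 - α) * q1 := by rw [pow_succ]; ring
      _ ≤ 2 * V x * α ^ (t + 1) := by nlinarith [h.α1, hqle, h.α0.le]


end

end Stmt14Proof

theorem stmt14 {X : Type*} [Fintype X] [DecidableEq X] [Nonempty X]
    (π : X → ℝ) (hπpos : ∀ x, 0 < π x) (hπsum : ∑ x, π x = 1)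
    (P : Matrix X X ℝ) (hProw : ∀ x, ∑ y, P x y = 1) (hPnn : ∀ x y, 0 ≤ P x y)
    (hstat : ∀ y, ∑ x, π x * P x y = π y)
    (hrev : ∀ x y, π x * P x y = π y * P y x)
    (hpsd : (Matrix.of fun x y => Real.sqrt (π x / π y) * P x y).PosSemidef)
    (xstar : X) (V : X → ℝ) (hV : ∀ x, 1 ≤ V x)
    (α : ℝ) (hα0 : 0 < α) (hα1 : α < 1)
    (hdrift : ∀ x, x ≠ xstar → ∑ y, P x y * V y ≤ α * V x) :
    (∀ t : ℕ, ∀ x, tvDist (fun y => (P ^ t) x y) π ≤ 2 * V x * α ^ (t + 1)) ∧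
    (∀ ε : ℝ, 0 < ε → ε < 1 / 2 → ∀ x,
      (mixTimeFrom P π ε x : ℝ) ≤ (1 - α)⁻¹ * Real.log (2 * V x / ε)) := by
  classical
  set W : X → ℝ := fun z => if z = xstar then 1 else V z with hW
  have hWle : ∀ z, W z ≤ V z := by
    intro z
    by_cases hz : z = xstar
    · simpa [hW, hz] using hV xstar
    · simp [hW, hz]
  have hW1 : ∀ z, 1 ≤ W z := by
    intro z
    by_cases hz : z = xstar
    · simp [hW, hz]
    · simpa [hW, hz] using hV z
  have hWdrift : ∀ x, x ≠ xstar → ∑ y, P x y * W y ≤ α * W x := by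
    intro x hx
    have h1 : ∑ y, P x y * W y ≤ ∑ y, P x y * V y :=
      Finset.sum_le_sum fun y _ => mul_le_mul_of_nonneg_left (hWle y) (hPnn x y)
    have h3 : W x = V x := by simp [hW, hx]
    rw [h3]
    exact le_trans h1 (hdrift x hx)
  have hH : Stmt14Proof.H π P xstar W α :=
    ⟨hπpos, hπsum, hProw, hPnn, hstat, hrev, hpsd, hW1, by simp [hW], hα0, hα1, hWdrift⟩
  have part1 : ∀ t : ℕ, ∀ x, tvDist (fun y => (P ^ t) x y) π ≤ 2 * V x * α ^ (t + 1) := by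
    intro t x
    have hb : ∀ A : Finset X, |∑ a ∈ A, (P ^ t) x a - ∑ a ∈ A, π a|
        ≤ 2 * V x * α ^ (t + 1) := by
      intro A
      have h1 := Stmt14Proof.master_abs hH t x A
      have h2 : |∑ a ∈ A, (P ^ t) x a - ∑ a ∈ A, π a|
          = |∑ y ∈ A, ((P ^ t) x y - π y)| := by
        rw [← Finset.sum_sub_distrib]
      rw [h2]
      calc |∑ y ∈ A, ((P ^ t) x y - π y)| ≤ 2 * W x * α ^ (t + 1) := h1
        _ ≤ 2 * V x * α ^ (t + 1) := by
            have := hWle x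
            have hp : (0:ℝ) ≤ α ^ (t + 1) := pow_nonneg hα0.le _
            nlinarith
    rw [tvDist]
    exact ciSup_le hb
  refine ⟨part1, ?_⟩
  intro ε hε0 hε12 x
  set L : ℝ := (1 - α)⁻¹ * Real.log (2 * V x / ε) with hLdef
  have h2V : (1:ℝ) ≤ V x := hV x
  have hz1 : (1:ℝ) < 2 * V x / ε := by
    rw [lt_div_iff₀ hε0]
    nlinarith
  have hzpos : (0:ℝ) < 2 * V x / ε := lt_trans zero_lt_one hz1
  have hlog : 0 < Real.log (2 * V x / ε) := Real.log_pos hz1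
  have h1α : 0 < 1 - α := by linarith
  have hL0 : 0 ≤ L := le_of_lt (mul_pos (inv_pos.mpr h1α) hlog)
  set n := ⌊L⌋₊ with hn
  have hpow : 2 * V x * α ^ (n + 1) ≤ ε := by
    have hαexp : α ≤ Real.exp (α - 1) := by
      have := Real.add_one_le_exp (α - 1)
      linarith
    have hpow2 : α ^ (n + 1) ≤ Real.exp ((α - 1) * ((n : ℝ) + 1)) := by
      have hc : (((n + 1 : ℕ)) : ℝ) * (α - 1) = (α - 1) * ((n : ℝ) + 1) := by
        push_cast
        ring
      calc α ^ (n + 1) ≤ (Real.exp (α - 1)) ^ (n + 1) :=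
            pow_le_pow_left₀ hα0.le hαexp _
        _ = Real.exp ((α - 1) * ((n : ℝ) + 1)) := by
            rw [← Real.exp_nat_mul, hc]
    have hnL : L < (n : ℝ) + 1 := Nat.lt_floor_add_one L
    have hlogL : Real.log (2 * V x / ε) = (1 - α) * L := by
      rw [hLdef]
      field_simp
    have hexp_le : Real.exp ((α - 1) * ((n : ℝ) + 1))
        ≤ Real.exp (-Real.log (2 * V x / ε)) := by
      apply Real.exp_le_exp.mpr
      rw [hlogL]
      nlinarith
    have hexp_val : Real.exp (-Real.log (2 * V x / ε)) = ε / (2 * V x) := by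
      rw [Real.exp_neg, Real.exp_log hzpos, inv_div]
    have h2Vpos : (0:ℝ) < 2 * V x := by nlinarith
    calc 2 * V x * α ^ (n + 1)
        ≤ 2 * V x * Real.exp ((α - 1) * ((n : ℝ) + 1)) :=
          mul_le_mul_of_nonneg_left hpow2 h2Vpos.le
      _ ≤ 2 * V x * (ε / (2 * V x)) := by
          rw [← hexp_val]
          exact mul_le_mul_of_nonneg_left hexp_le h2Vpos.le
      _ = ε := by field_simp
  have hmem : tvDist (fun y => (P ^ n) x y) π ≤ ε := le_trans (part1 n x) hpow
  have hsInf : mixTimeFrom P π ε x ≤ n := by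
    apply Nat.sInf_le
    exact hmem
  calc (mixTimeFrom P π ε x : ℝ) ≤ (n : ℝ) := Nat.cast_le.mpr hsInf
    _ ≤ L := Nat.floor_le hL0
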